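/- Let λ_c > 0, α ∈ [0, λ_c] (where λ_c is the top eigenvalue of a unit-trace PSD matrix, so λ_c ≤ 1). Define Δ_c(N) = −log((N² λ_c² + 2N λ_c α + 1)/(N+1)²) + log(λ_c²). Then N·Δ_c(N) → 2 − 2α/λ_c as N → ∞. -/

import Mathlib

open Filter

lemma aux_nlog (u : ℕ → ℝ) (L : ℝ) (hpos : ∀ᶠ n in atTop, 0 < u n)
    (h : Tendsto (fun n : ℕ => (n : ℝ) * u n) atTop (nhds L)) :
    Tendsto (fun n : ℕ => (n : ℝ) * Real.log (1 + u n)) atTop (nhds L) := by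
  have hu0 : Tendsto u atTop (nhds (0 : ℝ)) := by
    have h2 := h.mul tendsto_one_div_atTop_nhds_zero_nat
    rw [mul_zero] at h2
    apply h2.congr'
    filter_upwards [eventually_ge_atTop 1] with n hn
    have : (n : ℝ) ≠ 0 := Nat.cast_ne_zero.mpr (by omega)
    field_simp
  have hslope : Tendsto (fun y : ℝ => (Real.log y - Real.log 1) / (y - 1))
      (nhdsWithin 1 {(1:ℝ)}ᶜ) (nhds 1) := by
    have hd := Real.hasDerivAt_log (one_ne_zero)
    rw [hasDerivAt_iff_tendsto_slope] at hd
    have he : (fun y : ℝ => (Real.log y - Real.log 1) / (y - 1)) = slope Real.log 1 := by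
      funext y; simp [slope_def_field]
    rw [he]
    simpa using hd
  have h1u : Tendsto (fun n => 1 + u n) atTop (nhdsWithin 1 {(1:ℝ)}ᶜ) := by
    rw [tendsto_nhdsWithin_iff]
    constructor
    · simpa using tendsto_const_nhds.add hu0
    · filter_upwards [hpos] with n hn
      simp only [Set.mem_compl_iff, Set.mem_singleton_iff]
      intro hcon
      nlinarith
  have hratio : Tendsto (fun n => Real.log (1 + u n) / u n) atTop (nhds 1) := by
    have hc := hslope.comp h1u
    apply hc.congr'
    filter_upwards [hpos] with n hn
    simp [Real.log_one]
  have hfin := h.mul hratio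
  rw [mul_one] at hfin
  apply hfin.congr'
  filter_upwards [hpos] with n hn
  have : u n ≠ 0 := ne_of_gt hn
  field_simp

/-- For λ_c > 0 and α ∈ [0, λ_c] with λ_c ≤ 1, the scaled class-conditional
novelty N·Δ_c(N) tends to 2 − 2α/λ_c as N → ∞, where
Δ_c(N) = −log((N²λ_c² + 2Nλ_cα + 1)/(N+1)²) + log(λ_c²). -/
theorem class_novelty_asymptotic_scaling
    (lamc α : ℝ) (hlam : 0 < lamc) (hlam1 : lamc ≤ 1)
    (hα0 : 0 ≤ α) (hαlam : α ≤ lamc) :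
    Tendsto
      (fun N : ℕ =>
        (N : ℝ) *
          (-Real.log (((N : ℝ) ^ 2 * lamc ^ 2 + 2 * (N : ℝ) * lamc * α + 1)
              / ((N : ℝ) + 1) ^ 2) + Real.log (lamc ^ 2)))
      atTop (nhds (2 - 2 * α / lamc)) := by
  set u1 : ℕ → ℝ := fun n : ℕ => 1 / (n : ℝ) with hu1
  set u2 : ℕ → ℝ := fun n : ℕ => (2 * (n : ℝ) * lamc * α + 1) / ((n : ℝ) ^ 2 * lamc ^ 2) with hu2
  have hT1 : Tendsto (fun n : ℕ => (n : ℝ) * Real.log (1 + u1 n)) atTop (nhds 1) := by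
    apply aux_nlog
    · filter_upwards [eventually_ge_atTop 1] with n hn
      have : (0:ℝ) < (n:ℝ) := by exact_mod_cast Nat.pos_of_ne_zero (by omega)
      simp only [hu1]
      positivity
    · apply tendsto_const_nhds.congr'
      filter_upwards [eventually_ge_atTop 1] with n hn
      have : (n : ℝ) ≠ 0 := Nat.cast_ne_zero.mpr (by omega)
      simp only [hu1]
      field_simp [hu1]
  have hT2 : Tendsto (fun n : ℕ => (n : ℝ) * Real.log (1 + u2 n)) atTop (nhds (2 * α / lamc)) := by
    apply aux_nlog
    · filter_upwards [eventually_ge_atTop 1] with n hn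
      have hn0 : (0:ℝ) < (n:ℝ) := by exact_mod_cast Nat.pos_of_ne_zero (by omega)
      have h1 : 0 < 2 * (n : ℝ) * lamc * α + 1 := by positivity
      simp only [hu2]
      positivity
    · have key : Tendsto (fun n : ℕ => 2 * α / lamc + (1 / (n : ℝ)) / lamc ^ 2)
          atTop (nhds (2 * α / lamc)) := by
        have h2 : Tendsto (fun n : ℕ => (1 / (n : ℝ)) / lamc ^ 2) atTop (nhds (0 / lamc ^ 2)) :=
          tendsto_one_div_atTop_nhds_zero_nat.div_const _
        rw [zero_div] at h2
        simpa using tendsto_const_nhds.add h2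
      apply key.congr'
      filter_upwards [eventually_ge_atTop 1] with n hn
      have hn0 : (n : ℝ) ≠ 0 := Nat.cast_ne_zero.mpr (by omega)
      have hl : lamc ≠ 0 := ne_of_gt hlam
      simp only [hu2]
      field_simp [hu2]
  have hcomb : Tendsto (fun n : ℕ => 2 * ((n : ℝ) * Real.log (1 + u1 n))
      - (n : ℝ) * Real.log (1 + u2 n)) atTop (nhds (2 - 2 * α / lamc)) := by
    have := ((hT1.const_mul 2).sub hT2)
    simpa using this
  apply hcomb.congr'
  filter_upwards [eventually_ge_atTop 1] with n hn
  have hn0 : (0:ℝ) < (n:ℝ) := by exact_mod_cast Nat.pos_of_ne_zero (by omega)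
  have hf : 0 < (n:ℝ) ^ 2 * lamc ^ 2 + 2 * (n:ℝ) * lamc * α + 1 := by positivity
  have e1 : 1 + u1 n = ((n:ℝ) + 1) / (n:ℝ) := by
    rw [hu1]; field_simp
  have e2 : 1 + u2 n = ((n:ℝ) ^ 2 * lamc ^ 2 + 2 * (n:ℝ) * lamc * α + 1)
      / ((n:ℝ) ^ 2 * lamc ^ 2) := by
    rw [hu2]; field_simp; ring
  rw [e1, e2]
  rw [Real.log_div (ne_of_gt hf) (by positivity),
      Real.log_div (by positivity) (ne_of_gt hn0),
      Real.log_div (ne_of_gt hf) (by positivity),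
      Real.log_mul (by positivity) (by positivity),
      Real.log_pow, Real.log_pow, Real.log_pow]
  push_cast
  ring
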